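/- Suppose L₁ and L₂ are languages of data trees over alphabets Σ₁ and Σ₂ recognizable by class automata, and suppose f : Σ₁ → Σ₂ is a function, extended to a relabeling f̂ on data trees that applies f to every node label while preserving tree structure and data values. Then the image f̂(L₁) and the inverse image f̂⁻¹(L₂) are also recognizable by class automata. Moreover, if L, L' are class-automaton-recognizable languages over the same alphabet, then L ∪ L' and L ∩ L' are class-automaton recognizable. -/

import Mathlib

/-- Finite binary trees with labels in `A`. -/
inductive BTree (A : Type) : Type
  | leaf : BTree A
  | node : A → BTree A → BTree A → BTree A

namespace BTree

def map {A B : Type} (f : A → B) : BTree A → BTree B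
  | .leaf => .leaf
  | .node a l r => .node (f a) (l.map f) (r.map f)

/-- Positions (nodes) of a tree: root-to-node paths. -/
def pos {A : Type} : BTree A → Set (List Bool)
  | .leaf => ∅
  | .node _ l r =>
      insert [] ({p | ∃ q ∈ l.pos, p = false :: q} ∪ {p | ∃ q ∈ r.pos, p = true :: q})

/-- Two trees have the same shape (same set of nodes). -/
def SameShape {A B : Type} (t : BTree A) (s : BTree B) : Prop :=
  t.map (fun _ => ()) = s.map (fun _ => ())

/-- Zip of two trees of the same shape. -/
def zip {A B : Type} : BTree A → BTree B → BTree (A × B)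
  | .node a l r, .node b l' r' => .node (a, b) (l.zip l') (r.zip r')
  | _, _ => .leaf

open Classical in
/-- Mark a tree by the characteristic function of a set of positions. -/
noncomputable def markAux {A : Type} (X : Set (List Bool)) :
    List Bool → BTree A → BTree (A × Bool)
  | _, .leaf => .leaf
  | p, .node a l r =>
      .node (a, if p ∈ X then true else false)
        (markAux X (p ++ [false]) l) (markAux X (p ++ [true]) r)

/-- `t.mark X` is `t ⊗ X`. -/
noncomputable def mark {A : Type} (t : BTree A) (X : Set (List Bool)) :
    BTree (A × Bool) :=
  markAux X [] t

end BTree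

/-- A nondeterministic bottom-up tree automaton; its languages are exactly the
regular tree languages. -/
structure NTA (A : Type) where
  n : ℕ
  init : Set (Fin n)
  step : A → Fin n → Fin n → Set (Fin n)
  acc : Set (Fin n)

def NTA.eval {A : Type} (M : NTA A) : BTree A → Set (Fin M.n)
  | .leaf => M.init
  | .node a l r => {q | ∃ ql ∈ M.eval l, ∃ qr ∈ M.eval r, q ∈ M.step a ql qr}

def NTA.Accepts {A : Type} (M : NTA A) (t : BTree A) : Prop :=
  (M.eval t ∩ M.acc).Nonempty

/-- `r` is an equivalence relation on the positions of `t`, i.e. `(t, r)` is a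
data tree. -/
def IsDataTree {A : Type} (t : BTree A) (r : List Bool → List Bool → Prop) : Prop :=
  (∀ x ∈ t.pos, r x x) ∧ (∀ x y, r x y → r y x) ∧
  (∀ x y z, r x y → r y z → r x z) ∧ (∀ x y, r x y → x ∈ t.pos ∧ y ∈ t.pos)

/-- `X` is a class of the data tree `(t, r)`. -/
def IsClass {A : Type} (t : BTree A) (r : List Bool → List Bool → Prop)
    (X : Set (List Bool)) : Prop :=
  ∃ x ∈ t.pos, X = {y | r x y}

/-- A class automaton: a work alphabet `Γ`, a letter-to-letter transducer
(a regular tree language over `A × Γ`) and a regular class condition over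
`Γ × Bool`. -/
structure ClassAut (A : Type) where
  Γ : Type
  finite : Finite Γ
  trans : NTA (A × Γ)
  cond : NTA (Γ × Bool)

/-- Acceptance of a data tree by a class automaton: some transducer output `s`
(of the same shape) is such that for every class `X`, the marked tree `s ⊗ X`
satisfies the class condition. -/
def ClassAut.Accepts {A : Type} (M : ClassAut A) (t : BTree A)
    (r : List Bool → List Bool → Prop) : Prop :=
  ∃ s : BTree M.Γ, BTree.SameShape t s ∧ M.trans.Accepts (t.zip s) ∧
    ∀ X, IsClass t r X → M.cond.Accepts (s.mark X)

/-- A language of data trees. -/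
abbrev DataLang (A : Type) :=
  Set (BTree A × (List Bool → List Bool → Prop))

/-- Recognizability by class automata. -/
def RecognizableCA {A : Type} (L : DataLang A) : Prop :=
  ∃ M : ClassAut A, ∀ t r, IsDataTree t r → ((t, r) ∈ L ↔ M.Accepts t r)

namespace BTree

theorem map_map {A B C : Type} (f : A → B) (g : B → C) (t : BTree A) :
    (t.map f).map g = t.map (g ∘ f) := by
  induction t with
  | leaf => rfl
  | node a l r ihl ihr => simp [map, ihl, ihr]

theorem map_id {A : Type} (t : BTree A) : t.map (fun x => x) = t := by
  induction t with
  | leaf => rfl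
  | node a l r ihl ihr => simp [map, ihl, ihr]

theorem pos_map {A B : Type} (f : A → B) (t : BTree A) : (t.map f).pos = t.pos := by
  induction t with
  | leaf => rfl
  | node a l r ihl ihr => simp [map, pos, ihl, ihr]

theorem map_unit {A B : Type} (f : A → B) (t : BTree A) :
    (t.map f).map (fun _ => ()) = t.map (fun _ => ()) := by
  rw [map_map]

theorem sameShape_map_left {A A' B : Type} (f : A → A') (t : BTree A) (s : BTree B) :
    SameShape (t.map f) s ↔ SameShape t s := by
  unfold SameShape; rw [map_unit]

theorem sameShape_map_right {A A' B : Type} (f : A → A') (t : BTree B) (s : BTree A) :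
    SameShape t (s.map f) ↔ SameShape t s := by
  unfold SameShape; rw [map_unit]

theorem sameShape_pos {A B : Type} {t : BTree A} {s : BTree B}
    (h : SameShape t s) : t.pos = s.pos := by
  have := congrArg pos h
  rwa [pos_map, pos_map] at this

theorem zip_map_left {A A' B : Type} (f : A → A') (t : BTree A) (s : BTree B) :
    (t.map f).zip s = (t.zip s).map (Prod.map f (fun x => x)) := by
  induction t generalizing s with
  | leaf => cases s <;> rfl
  | node a l r ihl ihr => cases s <;> simp [map, zip, ihl, ihr, Prod.map]

theorem zip_map_right {A B B' : Type} (g : B → B') (t : BTree A) (s : BTree B) :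
    t.zip (s.map g) = (t.zip s).map (Prod.map (fun x => x) g) := by
  induction t generalizing s with
  | leaf => cases s <;> rfl
  | node a l r ihl ihr => cases s <;> simp [map, zip, ihl, ihr, Prod.map]

theorem map_pair {A B C : Type} (f : A → B) (g : A → C) (t : BTree A) :
    (t.map f).zip (t.map g) = t.map (fun x => (f x, g x)) := by
  induction t with
  | leaf => rfl
  | node a l r ihl ihr => simp [map, zip, ihl, ihr]

theorem zip_fst_snd {A B : Type} (w : BTree (A × B)) :
    (w.map Prod.fst).zip (w.map Prod.snd) = w := by
  rw [map_pair]; exact map_id w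

theorem map_fst_zip {A B : Type} {t : BTree A} {s : BTree B} (h : SameShape t s) :
    (t.zip s).map Prod.fst = t := by
  induction t generalizing s with
  | leaf => cases s with
    | leaf => rfl
    | node b l' r' => exact absurd h (by simp [SameShape, map])
  | node a l r ihl ihr =>
    cases s with
    | leaf => exact absurd h (by simp [SameShape, map])
    | node b l' r' =>
      simp only [SameShape, map, BTree.node.injEq] at h
      simp [zip, map, ihl h.2.1, ihr h.2.2]

theorem map_snd_zip {A B : Type} {t : BTree A} {s : BTree B} (h : SameShape t s) :
    (t.zip s).map Prod.snd = s := by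
  induction t generalizing s with
  | leaf => cases s with
    | leaf => rfl
    | node b l' r' => exact absurd h (by simp [SameShape, map])
  | node a l r ihl ihr =>
    cases s with
    | leaf => exact absurd h (by simp [SameShape, map])
    | node b l' r' =>
      simp only [SameShape, map, BTree.node.injEq] at h
      simp [zip, map, ihl h.2.1, ihr h.2.2]

theorem sameShape_zip {A B : Type} {t : BTree A} {s : BTree B} (h : SameShape t s) :
    SameShape t (t.zip s) := by
  unfold SameShape
  conv_lhs => rw [← map_fst_zip h]
  rw [map_map]

theorem markAux_map {A B : Type} (g : A → B) (X : Set (List Bool)) (s : BTree A)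
    (p : List Bool) :
    BTree.markAux X p (s.map g) = (BTree.markAux X p s).map (Prod.map g (fun x => x)) := by
  induction s generalizing p with
  | leaf => rfl
  | node a l r ihl ihr => simp [map, markAux, ihl, ihr, Prod.map]

theorem mark_map {A B : Type} (g : A → B) (X : Set (List Bool)) (s : BTree A) :
    (s.map g).mark X = (s.mark X).map (Prod.map g (fun x => x)) :=
  markAux_map g X s []

theorem map_injective {A B : Type} {f : A → B} (hf : Function.Injective f) :
    Function.Injective (BTree.map f) := by
  intro t t' h
  induction t generalizing t' with
  | leaf => cases t' with
    | leaf => rfl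
    | node => exact absurd h (by simp [map])
  | node a l r ihl ihr =>
    cases t' with
    | leaf => exact absurd h (by simp [map])
    | node a' l' r' =>
      simp only [map, BTree.node.injEq] at h
      rw [hf h.1, ihl h.2.1, ihr h.2.2]

theorem mark_eq_leaf_iff {A : Type} (s : BTree A) (X : Set (List Bool)) :
    s.mark X = .leaf ↔ s = .leaf := by
  cases s <;> simp [mark, markAux]

theorem sameShape_leaf_iff {A B : Type} {s : BTree B} :
    SameShape (BTree.leaf : BTree A) s ↔ s = .leaf := by
  cases s <;> simp [SameShape, map]

/-- All labels of a tree satisfy `P`. -/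
def AllP {A : Type} (P : A → Prop) : BTree A → Prop
  | .leaf => True
  | .node a l r => P a ∧ AllP P l ∧ AllP P r

end BTree
/-- A nondeterministic tree automaton with an arbitrary finite state type. -/
structure GNTA (A : Type) where
  S : Type
  fin : Finite S
  init : Set S
  step : A → S → S → Set S
  acc : Set S

def GNTA.eval {A : Type} (M : GNTA A) : BTree A → Set M.S
  | .leaf => M.init
  | .node a l r => {q | ∃ ql ∈ M.eval l, ∃ qr ∈ M.eval r, q ∈ M.step a ql qr}

def GNTA.Accepts {A : Type} (M : GNTA A) (t : BTree A) : Prop :=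
  (M.eval t ∩ M.acc).Nonempty

noncomputable def GNTA.equiv {A : Type} (M : GNTA A) : M.S ≃ Fin (Nat.card M.S) :=
  haveI := M.fin
  Finite.equivFin M.S

noncomputable def GNTA.toNTA {A : Type} (M : GNTA A) : NTA A where
  n := Nat.card M.S
  init := M.equiv '' M.init
  step a q p := M.equiv '' M.step a (M.equiv.symm q) (M.equiv.symm p)
  acc := M.equiv '' M.acc

theorem GNTA.eval_toNTA {A : Type} (M : GNTA A) (t : BTree A) :
    M.toNTA.eval t = M.equiv '' M.eval t := by
  induction t with
  | leaf => rfl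
  | node a l r ihl ihr =>
    ext q
    constructor
    · rintro ⟨ql, hql, qr, hqr, hstep⟩
      rw [ihl] at hql; rw [ihr] at hqr
      obtain ⟨pl, hpl, rfl⟩ := hql
      obtain ⟨pr, hpr, rfl⟩ := hqr
      obtain ⟨p, hp, rfl⟩ := hstep
      simp only [Equiv.symm_apply_apply] at hp
      exact ⟨p, ⟨pl, hpl, pr, hpr, hp⟩, rfl⟩
    · rintro ⟨p, ⟨pl, hpl, pr, hpr, hp⟩, rfl⟩
      refine ⟨M.equiv pl, by rw [ihl]; exact ⟨pl, hpl, rfl⟩,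
        M.equiv pr, by rw [ihr]; exact ⟨pr, hpr, rfl⟩, ⟨p, ?_, rfl⟩⟩
      simpa only [Equiv.symm_apply_apply] using hp

theorem GNTA.accepts_toNTA {A : Type} (M : GNTA A) (t : BTree A) :
    M.toNTA.Accepts t ↔ M.Accepts t := by
  unfold NTA.Accepts GNTA.Accepts
  rw [eval_toNTA]
  show (M.equiv '' _ ∩ M.equiv '' _).Nonempty ↔ _
  rw [← Set.image_inter M.equiv.injective]
  exact Set.image_nonempty

/-- Pullback of an NTA along a letter relabeling. -/
def NTA.pull {A B : Type} (g : A → B) (M : NTA B) : NTA A where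
  n := M.n
  init := M.init
  step a := M.step (g a)
  acc := M.acc

theorem NTA.eval_pull {A B : Type} (g : A → B) (M : NTA B) (t : BTree A) :
    (M.pull g).eval t = M.eval (t.map g) := by
  induction t with
  | leaf => rfl
  | node a l r ihl ihr =>
    show {q | ∃ ql ∈ (M.pull g).eval l, ∃ qr ∈ (M.pull g).eval r, q ∈ M.step (g a) ql qr} = _
    rw [ihl, ihr]; rfl

theorem NTA.accepts_pull {A B : Type} (g : A → B) (M : NTA B) (t : BTree A) :
    (M.pull g).Accepts t ↔ M.Accepts (t.map g) := by
  unfold NTA.Accepts; rw [eval_pull]; rfl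

/-- Guarded pullback: additionally checks that every letter satisfies `P`. -/
def NTA.gpull {A B : Type} (P : A → Prop) (g : A → B) (M : NTA B) : NTA A where
  n := M.n
  init := M.init
  step a q p := {q' | P a ∧ q' ∈ M.step (g a) q p}
  acc := M.acc

theorem NTA.eval_gpull {A B : Type} (P : A → Prop) (g : A → B) (M : NTA B) (t : BTree A) :
    (M.gpull P g).eval t = {q | BTree.AllP P t ∧ q ∈ M.eval (t.map g)} := by
  induction t with
  | leaf => simp [NTA.eval, gpull, BTree.AllP, BTree.map]
  | node a l r ihl ihr =>
    ext q
    show (∃ ql ∈ (M.gpull P g).eval l, ∃ qr ∈ (M.gpull P g).eval r,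
      P a ∧ q ∈ M.step (g a) ql qr) ↔ _
    rw [ihl, ihr]
    simp only [BTree.AllP, BTree.map, Set.mem_setOf_eq, NTA.eval]
    constructor
    · rintro ⟨ql, ⟨hPl, hql⟩, qr, ⟨hPr, hqr⟩, hPa, hstep⟩
      exact ⟨⟨hPa, hPl, hPr⟩, ql, hql, qr, hqr, hstep⟩
    · rintro ⟨⟨hPa, hPl, hPr⟩, ql, hql, qr, hqr, hstep⟩
      exact ⟨ql, ⟨hPl, hql⟩, qr, ⟨hPr, hqr⟩, hPa, hstep⟩

theorem NTA.accepts_gpull {A B : Type} (P : A → Prop) (g : A → B) (M : NTA B) (t : BTree A) :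
    (M.gpull P g).Accepts t ↔ BTree.AllP P t ∧ M.Accepts (t.map g) := by
  unfold NTA.Accepts
  rw [eval_gpull]
  constructor
  · rintro ⟨q, ⟨hP, hq⟩, hacc⟩; exact ⟨hP, q, hq, hacc⟩
  · rintro ⟨hP, q, hq, hacc⟩; exact ⟨q, ⟨hP, hq⟩, hacc⟩

/-- Disjoint union of two NTAs, over the sum alphabet. -/
def NTA.sum {B C : Type} (M : NTA B) (N : NTA C) : GNTA (B ⊕ C) where
  S := Fin M.n ⊕ Fin N.n
  fin := inferInstance
  init := Sum.inl '' M.init ∪ Sum.inr '' N.init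
  step x q p :=
    match x, q, p with
    | Sum.inl b, Sum.inl q, Sum.inl p => Sum.inl '' M.step b q p
    | Sum.inr c, Sum.inr q, Sum.inr p => Sum.inr '' N.step c q p
    | _, _, _ => ∅
  acc := Sum.inl '' M.acc ∪ Sum.inr '' N.acc

theorem NTA.sum_eval_inl {B C : Type} (M : NTA B) (N : NTA C) (w : BTree (B ⊕ C))
    (q : Fin M.n) :
    Sum.inl q ∈ (M.sum N).eval w ↔ ∃ u, w = u.map Sum.inl ∧ q ∈ M.eval u := by
  induction w generalizing q with
  | leaf =>
    simp only [GNTA.eval, NTA.sum, Set.mem_union, Set.mem_image]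
    constructor
    · rintro (⟨p, hp, hpq⟩ | ⟨p, hp, hpq⟩)
      · exact ⟨.leaf, rfl, by rwa [← Sum.inl_injective hpq]⟩
      · exact absurd hpq (by simp)
    · rintro ⟨u, hu, hq⟩
      cases u with
      | leaf => exact Or.inl ⟨q, hq, rfl⟩
      | node => exact absurd hu (by simp [BTree.map])
  | node x l r ihl ihr =>
    simp only [GNTA.eval, Set.mem_setOf_eq]
    constructor
    · rintro ⟨ql, hql, qr, hqr, hstep⟩
      match x, ql, qr with
      | Sum.inl b, Sum.inl ql, Sum.inl qr =>
        simp only [NTA.sum, Set.mem_image] at hstep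
        obtain ⟨p, hp, hpq⟩ := hstep
        obtain ⟨ul, hul, hql'⟩ := (ihl ql).mp hql
        obtain ⟨ur, hur, hqr'⟩ := (ihr qr).mp hqr
        exact ⟨.node b ul ur, by simp [BTree.map, hul, hur],
          ql, hql', qr, hqr', by rwa [← Sum.inl_injective hpq]⟩
      | Sum.inl b, Sum.inl ql, Sum.inr qr => exact absurd hstep (by simp [NTA.sum]; exact fun h => h)
      | Sum.inl b, Sum.inr ql, _ => exact absurd hstep (by simp [NTA.sum]; exact fun h => h)
      | Sum.inr c, Sum.inl ql, _ => exact absurd hstep (by simp [NTA.sum]; exact fun h => h)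
      | Sum.inr c, Sum.inr ql, Sum.inl qr => exact absurd hstep (by simp [NTA.sum]; exact fun h => h)
      | Sum.inr c, Sum.inr ql, Sum.inr qr =>
        simp only [NTA.sum, Set.mem_image] at hstep
        obtain ⟨p, hp, hpq⟩ := hstep
        exact absurd hpq (by simp)
    · rintro ⟨u, hu, hq⟩
      cases u with
      | leaf => exact absurd hu (by simp [BTree.map])
      | node b ul ur =>
        simp only [BTree.map, BTree.node.injEq] at hu
        obtain ⟨hx, hl, hr⟩ := hu
        obtain ⟨ql, hql, qr, hqr, hstep⟩ := hq
        refine ⟨Sum.inl ql, (ihl ql).mpr ⟨ul, hl, hql⟩,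
          Sum.inl qr, (ihr qr).mpr ⟨ur, hr, hqr⟩, ?_⟩
        subst hx
        exact ⟨q, hstep, rfl⟩

theorem NTA.sum_eval_inr {B C : Type} (M : NTA B) (N : NTA C) (w : BTree (B ⊕ C))
    (q : Fin N.n) :
    Sum.inr q ∈ (M.sum N).eval w ↔ ∃ u, w = u.map Sum.inr ∧ q ∈ N.eval u := by
  induction w generalizing q with
  | leaf =>
    simp only [GNTA.eval, NTA.sum, Set.mem_union, Set.mem_image]
    constructor
    · rintro (⟨p, hp, hpq⟩ | ⟨p, hp, hpq⟩)
      · exact absurd hpq (by simp)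
      · exact ⟨.leaf, rfl, by rwa [← Sum.inr_injective hpq]⟩
    · rintro ⟨u, hu, hq⟩
      cases u with
      | leaf => exact Or.inr ⟨q, hq, rfl⟩
      | node => exact absurd hu (by simp [BTree.map])
  | node x l r ihl ihr =>
    simp only [GNTA.eval, Set.mem_setOf_eq]
    constructor
    · rintro ⟨ql, hql, qr, hqr, hstep⟩
      match x, ql, qr with
      | Sum.inr c, Sum.inr ql, Sum.inr qr =>
        simp only [NTA.sum, Set.mem_image] at hstep
        obtain ⟨p, hp, hpq⟩ := hstep
        obtain ⟨ul, hul, hql'⟩ := (ihl ql).mp hql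
        obtain ⟨ur, hur, hqr'⟩ := (ihr qr).mp hqr
        exact ⟨.node c ul ur, by simp [BTree.map, hul, hur],
          ql, hql', qr, hqr', by rwa [← Sum.inr_injective hpq]⟩
      | Sum.inr c, Sum.inr ql, Sum.inl qr => exact absurd hstep (by simp [NTA.sum]; exact fun h => h)
      | Sum.inr c, Sum.inl ql, _ => exact absurd hstep (by simp [NTA.sum]; exact fun h => h)
      | Sum.inl b, Sum.inr ql, _ => exact absurd hstep (by simp [NTA.sum]; exact fun h => h)
      | Sum.inl b, Sum.inl ql, Sum.inr qr => exact absurd hstep (by simp [NTA.sum]; exact fun h => h)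
      | Sum.inl b, Sum.inl ql, Sum.inl qr =>
        simp only [NTA.sum, Set.mem_image] at hstep
        obtain ⟨p, hp, hpq⟩ := hstep
        exact absurd hpq (by simp)
    · rintro ⟨u, hu, hq⟩
      cases u with
      | leaf => exact absurd hu (by simp [BTree.map])
      | node c ul ur =>
        simp only [BTree.map, BTree.node.injEq] at hu
        obtain ⟨hx, hl, hr⟩ := hu
        obtain ⟨ql, hql, qr, hqr, hstep⟩ := hq
        refine ⟨Sum.inr ql, (ihl ql).mpr ⟨ul, hl, hql⟩,
          Sum.inr qr, (ihr qr).mpr ⟨ur, hr, hqr⟩, ?_⟩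
        subst hx
        exact ⟨q, hstep, rfl⟩

theorem NTA.sum_accepts {B C : Type} (M : NTA B) (N : NTA C) (w : BTree (B ⊕ C)) :
    (M.sum N).Accepts w ↔
      (∃ u, w = u.map Sum.inl ∧ M.Accepts u) ∨ (∃ u, w = u.map Sum.inr ∧ N.Accepts u) := by
  unfold GNTA.Accepts NTA.Accepts
  constructor
  · rintro ⟨q, hq, hacc⟩
    cases q with
    | inl q =>
      obtain ⟨u, hu, hq'⟩ := (sum_eval_inl M N w q).mp hq
      refine Or.inl ⟨u, hu, q, hq', ?_⟩
      rcases hacc with ⟨p, hp, hpq⟩ | ⟨p, hp, hpq⟩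
      · rwa [← Sum.inl_injective hpq]
      · exact absurd hpq (by simp)
    | inr q =>
      obtain ⟨u, hu, hq'⟩ := (sum_eval_inr M N w q).mp hq
      refine Or.inr ⟨u, hu, q, hq', ?_⟩
      rcases hacc with ⟨p, hp, hpq⟩ | ⟨p, hp, hpq⟩
      · exact absurd hpq (by simp)
      · rwa [← Sum.inr_injective hpq]
  · rintro (⟨u, hu, q, hq, hacc⟩ | ⟨u, hu, q, hq, hacc⟩)
    · exact ⟨Sum.inl q, (sum_eval_inl M N w q).mpr ⟨u, hu, hq⟩, Or.inl ⟨q, hacc, rfl⟩⟩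
    · exact ⟨Sum.inr q, (sum_eval_inr M N w q).mpr ⟨u, hu, hq⟩, Or.inr ⟨q, hacc, rfl⟩⟩

/-- Product of two NTAs, over the product alphabet. -/
def NTA.prod {B C : Type} (M : NTA B) (N : NTA C) : GNTA (B × C) where
  S := Fin M.n × Fin N.n
  fin := inferInstance
  init := M.init ×ˢ N.init
  step x q p := M.step x.1 q.1 p.1 ×ˢ N.step x.2 q.2 p.2
  acc := M.acc ×ˢ N.acc

theorem NTA.prod_eval {B C : Type} (M : NTA B) (N : NTA C) (w : BTree (B × C))
    (q : Fin M.n × Fin N.n) :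
    q ∈ (M.prod N).eval w ↔
      q.1 ∈ M.eval (w.map Prod.fst) ∧ q.2 ∈ N.eval (w.map Prod.snd) := by
  induction w generalizing q with
  | leaf => simp [GNTA.eval, NTA.eval, NTA.prod, BTree.map, Set.mem_prod]; exact Iff.rfl
  | node x l r ihl ihr =>
    simp only [GNTA.eval, NTA.eval, Set.mem_setOf_eq, BTree.map]
    constructor
    · rintro ⟨ql, hql, qr, hqr, hstep⟩
      obtain ⟨h1, h2⟩ := hstep
      exact ⟨⟨ql.1, ((ihl ql).mp hql).1, qr.1, ((ihr qr).mp hqr).1, h1⟩,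
        ⟨ql.2, ((ihl ql).mp hql).2, qr.2, ((ihr qr).mp hqr).2, h2⟩⟩
    · rintro ⟨⟨ql1, hql1, qr1, hqr1, h1⟩, ⟨ql2, hql2, qr2, hqr2, h2⟩⟩
      exact ⟨(ql1, ql2), (ihl _).mpr ⟨hql1, hql2⟩, (qr1, qr2), (ihr _).mpr ⟨hqr1, hqr2⟩,
        ⟨h1, h2⟩⟩

theorem NTA.prod_accepts {B C : Type} (M : NTA B) (N : NTA C) (w : BTree (B × C)) :
    (M.prod N).Accepts w ↔ M.Accepts (w.map Prod.fst) ∧ N.Accepts (w.map Prod.snd) := by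
  unfold GNTA.Accepts NTA.Accepts
  constructor
  · rintro ⟨q, hq, hacc⟩
    obtain ⟨h1, h2⟩ := (prod_eval M N w q).mp hq
    exact ⟨⟨q.1, h1, hacc.1⟩, ⟨q.2, h2, hacc.2⟩⟩
  · rintro ⟨⟨q1, hq1, ha1⟩, ⟨q2, hq2, ha2⟩⟩
    exact ⟨(q1, q2), (prod_eval M N w _).mpr ⟨hq1, hq2⟩, ⟨ha1, ha2⟩⟩
namespace BTree

theorem map_congr {A B : Type} {f g : A → B} (h : ∀ x, f x = g x) (t : BTree A) :
    t.map f = t.map g := by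
  induction t with
  | leaf => rfl
  | node a l r ihl ihr => simp [map, ihl, ihr, h]

theorem allP_map {A B : Type} (P : B → Prop) (f : A → B) (t : BTree A) :
    AllP P (t.map f) ↔ AllP (fun x => P (f x)) t := by
  induction t with
  | leaf => simp [AllP, map]
  | node a l r ihl ihr => simp [AllP, map, ihl, ihr]

theorem map_congr_allP {A B : Type} {f g : A → B} {t : BTree A}
    (h : AllP (fun x => f x = g x) t) : t.map f = t.map g := by
  induction t with
  | leaf => rfl
  | node a l r ihl ihr =>
    obtain ⟨h1, h2, h3⟩ := h
    simp [map, h1, ihl h2, ihr h3]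

end BTree

theorem isClass_congr {A B : Type} {t : BTree A} {t' : BTree B}
    (h : t.pos = t'.pos) (r : List Bool → List Bool → Prop) (X : Set (List Bool)) :
    IsClass t r X ↔ IsClass t' r X := by
  unfold IsClass; rw [h]

theorem isDataTree_congr {A B : Type} {t : BTree A} {t' : BTree B}
    (h : t.pos = t'.pos) (r : List Bool → List Bool → Prop) :
    IsDataTree t r ↔ IsDataTree t' r := by
  unfold IsDataTree; rw [h]

theorem rec_preimage {A₁ A₂ : Type} (f : A₁ → A₂) {L₂ : DataLang A₂}
    (h₂ : RecognizableCA L₂) :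
    RecognizableCA {p : BTree A₁ × (List Bool → List Bool → Prop) |
        (p.1.map f, p.2) ∈ L₂} := by
  obtain ⟨M, hM⟩ := h₂
  refine ⟨⟨M.Γ, M.finite, M.trans.pull (Prod.map f (fun x => x)), M.cond⟩, ?_⟩
  intro t r hdt
  have hdt' : IsDataTree (t.map f) r :=
    (isDataTree_congr (BTree.pos_map f t) r).mpr hdt
  rw [Set.mem_setOf_eq]
  rw [hM _ r hdt']
  unfold ClassAut.Accepts
  apply exists_congr; intro s
  rw [BTree.sameShape_map_left, NTA.accepts_pull, ← BTree.zip_map_left]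
  constructor
  · rintro ⟨h1, h2, h3⟩
    exact ⟨h1, h2, fun X hX => h3 X ((isClass_congr (BTree.pos_map f t) r X).mpr hX)⟩
  · rintro ⟨h1, h2, h3⟩
    exact ⟨h1, h2, fun X hX => h3 X ((isClass_congr (BTree.pos_map f t) r X).mp hX)⟩

theorem allP_zip_image {A₁ A₂ Γ : Type} (f : A₁ → A₂) :
    ∀ (t₁ : BTree A₁) (s : BTree Γ),
      BTree.AllP (fun x => f x.2.1 = x.1) ((t₁.map f).zip (t₁.zip s))
  | .leaf, _ => trivial
  | .node a l r, .leaf => trivial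
  | .node a l r, .node b sl sr =>
    ⟨rfl, allP_zip_image f l sl, allP_zip_image f r sr⟩

theorem image_shape {A₁ A₂ Γ : Type} (f : A₁ → A₂) :
    ∀ (t : BTree A₂) (s' : BTree (A₁ × Γ)), BTree.SameShape t s' →
      BTree.AllP (fun x => f x.2.1 = x.1) (t.zip s') → t = (s'.map Prod.fst).map f
  | .leaf, .leaf, _, _ => rfl
  | .leaf, .node _ _ _, h, _ => absurd h (by simp [BTree.SameShape, BTree.map])
  | .node _ _ _, .leaf, h, _ => absurd h (by simp [BTree.SameShape, BTree.map])
  | .node a l r, .node x sl sr, hsh, hP => by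
    simp only [BTree.SameShape, BTree.map, BTree.node.injEq] at hsh
    obtain ⟨hf, hPl, hPr⟩ := hP
    simp only [BTree.map, BTree.node.injEq]
    exact ⟨hf.symm, image_shape f l sl hsh.2.1 hPl, image_shape f r sr hsh.2.2 hPr⟩

theorem rec_image {A₁ A₂ : Type} [Finite A₁] (f : A₁ → A₂) {L₁ : DataLang A₁}
    (h₁ : RecognizableCA L₁) :
    RecognizableCA {p : BTree A₂ × (List Bool → List Bool → Prop) |
        ∃ t, (t, p.2) ∈ L₁ ∧ p.1 = t.map f} := by
  obtain ⟨M, hM⟩ := h₁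
  haveI := M.finite
  refine ⟨⟨A₁ × M.Γ, inferInstance,
    M.trans.gpull (fun x => f x.2.1 = x.1) Prod.snd,
    M.cond.pull (Prod.map Prod.snd (fun x => x))⟩, ?_⟩
  intro t₂ r hdt
  rw [Set.mem_setOf_eq]
  constructor
  · rintro ⟨t₁, hmem, ht₂⟩
    subst ht₂
    have hdt₁ : IsDataTree t₁ r :=
      (isDataTree_congr (BTree.pos_map f t₁) r).mp hdt
    obtain ⟨s, hsh, htr, hcl⟩ := (hM t₁ r hdt₁).mp hmem
    refine ⟨t₁.zip s, ?_, ?_, ?_⟩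
    · rw [BTree.sameShape_map_left]; exact BTree.sameShape_zip hsh
    · rw [NTA.accepts_gpull]
      refine ⟨allP_zip_image f t₁ s, ?_⟩
      rw [BTree.map_snd_zip (by rw [BTree.sameShape_map_left]; exact BTree.sameShape_zip hsh)]
      exact htr
    · intro X hX
      rw [NTA.accepts_pull]
      have heq : ((t₁.zip s).mark X).map (Prod.map Prod.snd (fun x => x)) = s.mark X := by
        rw [← BTree.mark_map, BTree.map_snd_zip hsh]
      rw [heq]
      apply hcl
      exact (isClass_congr (BTree.pos_map f t₁) r X).mp hX
  · rintro ⟨s', hsh, htr, hcl⟩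
    rw [NTA.accepts_gpull] at htr
    obtain ⟨hP, htr⟩ := htr
    rw [BTree.map_snd_zip hsh] at htr
    have ht₂ : t₂ = (s'.map Prod.fst).map f := image_shape f t₂ s' hsh hP
    have hpos : t₂.pos = (s'.map Prod.fst).pos := by
      rw [BTree.pos_map, ← BTree.sameShape_pos hsh]
    refine ⟨s'.map Prod.fst, ?_, ht₂⟩
    rw [hM _ r ((isDataTree_congr hpos r).mp hdt)]
    refine ⟨s'.map Prod.snd, ?_, ?_, ?_⟩
    · rw [BTree.sameShape_map_left, BTree.sameShape_map_right]; exact rfl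
    · rw [BTree.map_pair]
      have : s'.map (fun x => (x.1, x.2)) = s' := by
        rw [show (fun x : A₁ × M.Γ => (x.1, x.2)) = fun x => x from rfl, BTree.map_id]
      rwa [this]
    · intro X hX
      have := hcl X ((isClass_congr hpos r X).mpr hX)
      rw [NTA.accepts_pull, ← BTree.mark_map] at this
      exact this
theorem sameShape_leaf_iff' {A B : Type} {t : BTree A} :
    BTree.SameShape t (BTree.leaf : BTree B) ↔ t = .leaf := by
  cases t <;> simp [BTree.SameShape, BTree.map]

theorem eq_leaf_of_map_inl_eq_map_inr {X Y : Type} {w : BTree X} {v : BTree Y}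
    (h : w.map Sum.inl = v.map (Sum.inr : Y → X ⊕ Y)) :
    w = .leaf ∧ v = .leaf := by
  cases w with
  | leaf =>
    cases v with
    | leaf => exact ⟨rfl, rfl⟩
    | node b l' r' => exact absurd h (by simp [BTree.map])
  | node a l r =>
    cases v with
    | leaf => exact absurd h (by simp [BTree.map])
    | node b l' r' => exact absurd h (by simp [BTree.map])

def sumRelabT {A Γ Γ' : Type} : A × (Γ ⊕ Γ') → (A × Γ) ⊕ (A × Γ') := fun x =>
  match x.2 with
  | .inl γ => .inl (x.1, γ)
  | .inr γ => .inr (x.1, γ)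

def sumRelabC {Γ Γ' : Type} : (Γ ⊕ Γ') × Bool → (Γ × Bool) ⊕ (Γ' × Bool) := fun x =>
  match x.1 with
  | .inl γ => .inl (γ, x.2)
  | .inr γ => .inr (γ, x.2)

theorem sum_decompose_l {A Γ Γ' : Type} (t : BTree A) :
    ∀ (s'' : BTree (Γ ⊕ Γ')) (u : BTree (A × Γ)),
      BTree.SameShape t s'' → (t.zip s'').map sumRelabT = u.map Sum.inl →
      ∃ s : BTree Γ, s'' = s.map Sum.inl ∧ u = t.zip s := by
  induction t with
  | leaf =>
    intro s'' u hsh h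
    rw [BTree.sameShape_leaf_iff] at hsh
    subst hsh
    cases u with
    | leaf => exact ⟨.leaf, rfl, rfl⟩
    | node => exact absurd h (by simp [BTree.map, BTree.zip])
  | node a l r ihl ihr =>
    intro s'' u hsh h
    cases s'' with
    | leaf => exact absurd hsh (by simp [BTree.SameShape, BTree.map])
    | node x sl sr =>
      simp only [BTree.SameShape, BTree.map, BTree.node.injEq] at hsh
      cases u with
      | leaf => exact absurd h (by simp [BTree.map, BTree.zip])
      | node y ul ur =>
        simp only [BTree.zip, BTree.map, BTree.node.injEq] at h
        obtain ⟨hy, hl, hr⟩ := h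
        cases x with
        | inl γ =>
          simp only [sumRelabT, Sum.inl.injEq] at hy
          obtain ⟨s1, hs1, hu1⟩ := ihl sl ul hsh.2.1 hl
          obtain ⟨s2, hs2, hu2⟩ := ihr sr ur hsh.2.2 hr
          exact ⟨.node γ s1 s2, by simp [BTree.map, hs1, hs2],
            by simp [BTree.zip, hu1, hu2, ← hy]⟩
        | inr γ => exact absurd hy (by simp [sumRelabT])

theorem sum_decompose_r {A Γ Γ' : Type} (t : BTree A) :
    ∀ (s'' : BTree (Γ ⊕ Γ')) (u : BTree (A × Γ')),
      BTree.SameShape t s'' → (t.zip s'').map sumRelabT = u.map Sum.inr →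
      ∃ s : BTree Γ', s'' = s.map Sum.inr ∧ u = t.zip s := by
  induction t with
  | leaf =>
    intro s'' u hsh h
    rw [BTree.sameShape_leaf_iff] at hsh
    subst hsh
    cases u with
    | leaf => exact ⟨.leaf, rfl, rfl⟩
    | node => exact absurd h (by simp [BTree.map, BTree.zip])
  | node a l r ihl ihr =>
    intro s'' u hsh h
    cases s'' with
    | leaf => exact absurd hsh (by simp [BTree.SameShape, BTree.map])
    | node x sl sr =>
      simp only [BTree.SameShape, BTree.map, BTree.node.injEq] at hsh
      cases u with
      | leaf => exact absurd h (by simp [BTree.map, BTree.zip])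
      | node y ul ur =>
        simp only [BTree.zip, BTree.map, BTree.node.injEq] at h
        obtain ⟨hy, hl, hr⟩ := h
        cases x with
        | inr γ =>
          simp only [sumRelabT, Sum.inr.injEq] at hy
          obtain ⟨s1, hs1, hu1⟩ := ihl sl ul hsh.2.1 hl
          obtain ⟨s2, hs2, hu2⟩ := ihr sr ur hsh.2.2 hr
          exact ⟨.node γ s1 s2, by simp [BTree.map, hs1, hs2],
            by simp [BTree.zip, hu1, hu2, ← hy]⟩
        | inl γ => exact absurd hy (by simp [sumRelabT])

theorem rec_union {A : Type} {L L' : DataLang A}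
    (h : RecognizableCA L) (h' : RecognizableCA L') : RecognizableCA (L ∪ L') := by
  obtain ⟨M, hM⟩ := h
  obtain ⟨N, hN⟩ := h'
  haveI := M.finite
  haveI := N.finite
  refine ⟨⟨M.Γ ⊕ N.Γ, inferInstance,
    ((M.trans.sum N.trans).toNTA).pull sumRelabT,
    ((M.cond.sum N.cond).toNTA).pull sumRelabC⟩, ?_⟩
  intro t r hdt
  rw [Set.mem_union, hM t r hdt, hN t r hdt]
  constructor
  · rintro (⟨s, hsh, htr, hcl⟩ | ⟨s, hsh, htr, hcl⟩)
    · refine ⟨s.map Sum.inl, (BTree.sameShape_map_right _ _ _).mpr hsh, ?_, ?_⟩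
      · rw [NTA.accepts_pull, GNTA.accepts_toNTA, NTA.sum_accepts]
        refine Or.inl ⟨t.zip s, ?_, htr⟩
        rw [BTree.zip_map_right, BTree.map_map]
        exact (BTree.map_congr (by rintro ⟨a, γ⟩; rfl) _)
      · intro X hX
        rw [NTA.accepts_pull, GNTA.accepts_toNTA, NTA.sum_accepts]
        refine Or.inl ⟨s.mark X, ?_, hcl X hX⟩
        rw [BTree.mark_map, BTree.map_map]
        exact (BTree.map_congr (by rintro ⟨γ, b⟩; rfl) _)
    · refine ⟨s.map Sum.inr, (BTree.sameShape_map_right _ _ _).mpr hsh, ?_, ?_⟩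
      · rw [NTA.accepts_pull, GNTA.accepts_toNTA, NTA.sum_accepts]
        refine Or.inr ⟨t.zip s, ?_, htr⟩
        rw [BTree.zip_map_right, BTree.map_map]
        exact (BTree.map_congr (by rintro ⟨a, γ⟩; rfl) _)
      · intro X hX
        rw [NTA.accepts_pull, GNTA.accepts_toNTA, NTA.sum_accepts]
        refine Or.inr ⟨s.mark X, ?_, hcl X hX⟩
        rw [BTree.mark_map, BTree.map_map]
        exact (BTree.map_congr (by rintro ⟨γ, b⟩; rfl) _)
  · rintro ⟨s'', hsh, htr, hcl⟩
    rw [NTA.accepts_pull, GNTA.accepts_toNTA, NTA.sum_accepts] at htr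
    rcases htr with ⟨u, hu, hacc⟩ | ⟨u, hu, hacc⟩
    · obtain ⟨s, hs, hu'⟩ := sum_decompose_l t s'' u hsh hu
      subst hs; subst hu'
      left
      refine ⟨s, (BTree.sameShape_map_right _ _ _).mp hsh, hacc, ?_⟩
      intro X hX
      have hc := hcl X hX
      rw [NTA.accepts_pull, GNTA.accepts_toNTA, NTA.sum_accepts] at hc
      have hmap : ((s.map (Sum.inl : M.Γ → M.Γ ⊕ N.Γ)).mark X).map sumRelabC
          = (s.mark X).map (Sum.inl : M.Γ × Bool → (M.Γ × Bool) ⊕ (N.Γ × Bool)) := by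
        rw [BTree.mark_map, BTree.map_map]
        exact (BTree.map_congr (by rintro ⟨γ, b⟩; rfl) _)
      rw [hmap] at hc
      rcases hc with ⟨v, hv, hacc'⟩ | ⟨v, hv, hacc'⟩
      · rwa [BTree.map_injective Sum.inl_injective hv]
      · exfalso
        have hleaf : s.mark X = .leaf := (eq_leaf_of_map_inl_eq_map_inr hv).1
        rw [BTree.mark_eq_leaf_iff] at hleaf
        subst hleaf
        have ht : t = .leaf := by
          rw [← sameShape_leaf_iff']
          exact (BTree.sameShape_map_right _ _ _).mp hsh
        subst ht
        obtain ⟨x, hx, -⟩ := hX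
        exact hx
    · obtain ⟨s, hs, hu'⟩ := sum_decompose_r t s'' u hsh hu
      subst hs; subst hu'
      right
      refine ⟨s, (BTree.sameShape_map_right _ _ _).mp hsh, hacc, ?_⟩
      intro X hX
      have hc := hcl X hX
      rw [NTA.accepts_pull, GNTA.accepts_toNTA, NTA.sum_accepts] at hc
      have hmap : ((s.map (Sum.inr : N.Γ → M.Γ ⊕ N.Γ)).mark X).map sumRelabC
          = (s.mark X).map (Sum.inr : N.Γ × Bool → (M.Γ × Bool) ⊕ (N.Γ × Bool)) := by
        rw [BTree.mark_map, BTree.map_map]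
        exact (BTree.map_congr (by rintro ⟨γ, b⟩; rfl) _)
      rw [hmap] at hc
      rcases hc with ⟨v, hv, hacc'⟩ | ⟨v, hv, hacc'⟩
      · exfalso
        have hleaf : s.mark X = .leaf := (eq_leaf_of_map_inl_eq_map_inr hv.symm).2
        rw [BTree.mark_eq_leaf_iff] at hleaf
        subst hleaf
        have ht : t = .leaf := by
          rw [← sameShape_leaf_iff']
          exact (BTree.sameShape_map_right _ _ _).mp hsh
        subst ht
        obtain ⟨x, hx, -⟩ := hX
        exact hx
      · rwa [BTree.map_injective Sum.inr_injective hv]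

theorem rec_inter {A : Type} {L L' : DataLang A}
    (h : RecognizableCA L) (h' : RecognizableCA L') : RecognizableCA (L ∩ L') := by
  obtain ⟨M, hM⟩ := h
  obtain ⟨N, hN⟩ := h'
  haveI := M.finite
  haveI := N.finite
  refine ⟨⟨M.Γ × N.Γ, inferInstance,
    ((M.trans.prod N.trans).toNTA).pull (fun x => ((x.1, x.2.1), (x.1, x.2.2))),
    ((M.cond.prod N.cond).toNTA).pull (fun x => ((x.1.1, x.2), (x.1.2, x.2)))⟩, ?_⟩
  intro t r hdt
  rw [Set.mem_inter_iff, hM t r hdt, hN t r hdt]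
  constructor
  · rintro ⟨⟨s, hsh, htr, hcl⟩, ⟨s', hsh', htr', hcl'⟩⟩
    have hss' : BTree.SameShape s s' := hsh.symm.trans hsh'
    refine ⟨s.zip s', hsh.trans (BTree.sameShape_zip hss'), ?_, ?_⟩
    · rw [NTA.accepts_pull, GNTA.accepts_toNTA, NTA.prod_accepts]
      constructor
      · have heq : ((t.zip (s.zip s')).map
            (fun x => ((x.1, x.2.1), (x.1, x.2.2)))).map Prod.fst = t.zip s := by
          rw [BTree.map_map]
          rw [BTree.map_congr (f := Prod.fst ∘ (fun x : A × (M.Γ × N.Γ) =>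
            ((x.1, x.2.1), (x.1, x.2.2)))) (g := Prod.map (fun x => x) Prod.fst)
            (by rintro ⟨a, γ, γ'⟩; rfl) _]
          rw [← BTree.zip_map_right, BTree.map_fst_zip hss']
        rw [heq]; exact htr
      · have heq : ((t.zip (s.zip s')).map
            (fun x => ((x.1, x.2.1), (x.1, x.2.2)))).map Prod.snd = t.zip s' := by
          rw [BTree.map_map]
          rw [BTree.map_congr (f := Prod.snd ∘ (fun x : A × (M.Γ × N.Γ) =>
            ((x.1, x.2.1), (x.1, x.2.2)))) (g := Prod.map (fun x => x) Prod.snd)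
            (by rintro ⟨a, γ, γ'⟩; rfl) _]
          rw [← BTree.zip_map_right, BTree.map_snd_zip hss']
        rw [heq]; exact htr'
    · intro X hX
      rw [NTA.accepts_pull, GNTA.accepts_toNTA, NTA.prod_accepts]
      constructor
      · have heq : (((s.zip s').mark X).map
            (fun x => ((x.1.1, x.2), (x.1.2, x.2)))).map Prod.fst = s.mark X := by
          rw [BTree.map_map]
          rw [BTree.map_congr (f := Prod.fst ∘ (fun x : (M.Γ × N.Γ) × Bool =>
            ((x.1.1, x.2), (x.1.2, x.2)))) (g := Prod.map Prod.fst (fun x => x))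
            (by rintro ⟨⟨γ, γ'⟩, b⟩; rfl) _]
          rw [← BTree.mark_map, BTree.map_fst_zip hss']
        rw [heq]; exact hcl X hX
      · have heq : (((s.zip s').mark X).map
            (fun x => ((x.1.1, x.2), (x.1.2, x.2)))).map Prod.snd = s'.mark X := by
          rw [BTree.map_map]
          rw [BTree.map_congr (f := Prod.snd ∘ (fun x : (M.Γ × N.Γ) × Bool =>
            ((x.1.1, x.2), (x.1.2, x.2)))) (g := Prod.map Prod.snd (fun x => x))
            (by rintro ⟨⟨γ, γ'⟩, b⟩; rfl) _]
          rw [← BTree.mark_map, BTree.map_snd_zip hss']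
        rw [heq]; exact hcl' X hX
  · rintro ⟨s'', hsh, htr, hcl⟩
    rw [NTA.accepts_pull, GNTA.accepts_toNTA, NTA.prod_accepts] at htr
    obtain ⟨htrM, htrN⟩ := htr
    constructor
    · refine ⟨s''.map Prod.fst, (BTree.sameShape_map_right _ _ _).mpr hsh, ?_, ?_⟩
      · have heq : ((t.zip s'').map
            (fun x => ((x.1, x.2.1), (x.1, x.2.2)))).map Prod.fst
            = t.zip (s''.map Prod.fst) := by
          rw [BTree.map_map, BTree.zip_map_right]
          exact BTree.map_congr (by rintro ⟨a, γ, γ'⟩; rfl) _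
        rw [← heq]; exact htrM
      · intro X hX
        have hc := (hcl X hX)
        rw [NTA.accepts_pull, GNTA.accepts_toNTA, NTA.prod_accepts] at hc
        have heq : ((s''.mark X).map
            (fun x => ((x.1.1, x.2), (x.1.2, x.2)))).map Prod.fst
            = (s''.map Prod.fst).mark X := by
          rw [BTree.map_map, BTree.mark_map]
          exact BTree.map_congr (by rintro ⟨⟨γ, γ'⟩, b⟩; rfl) _
        rw [← heq]; exact hc.1
    · refine ⟨s''.map Prod.snd, (BTree.sameShape_map_right _ _ _).mpr hsh, ?_, ?_⟩
      · have heq : ((t.zip s'').map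
            (fun x => ((x.1, x.2.1), (x.1, x.2.2)))).map Prod.snd
            = t.zip (s''.map Prod.snd) := by
          rw [BTree.map_map, BTree.zip_map_right]
          exact BTree.map_congr (by rintro ⟨a, γ, γ'⟩; rfl) _
        rw [← heq]; exact htrN
      · intro X hX
        have hc := (hcl X hX)
        rw [NTA.accepts_pull, GNTA.accepts_toNTA, NTA.prod_accepts] at hc
        have heq : ((s''.mark X).map
            (fun x => ((x.1.1, x.2), (x.1.2, x.2)))).map Prod.snd
            = (s''.map Prod.snd).mark X := by
          rw [BTree.map_map, BTree.mark_map]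
          exact BTree.map_congr (by rintro ⟨⟨γ, γ'⟩, b⟩; rfl) _
        rw [← heq]; exact hc.2

/-- Class-automaton recognizable languages of data trees are closed under
images and inverse images of relabelings, and under union and intersection. -/
theorem stmt10 {A₁ A₂ : Type} [Finite A₁] [Finite A₂] (f : A₁ → A₂)
    (L₁ : DataLang A₁) (L₂ : DataLang A₂) (L L' : DataLang A₁)
    (h₁ : RecognizableCA L₁) (h₂ : RecognizableCA L₂)
    (hL : RecognizableCA L) (hL' : RecognizableCA L') :
    RecognizableCA {p : BTree A₂ × (List Bool → List Bool → Prop) |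
        ∃ t, (t, p.2) ∈ L₁ ∧ p.1 = t.map f} ∧
    RecognizableCA {p : BTree A₁ × (List Bool → List Bool → Prop) |
        (p.1.map f, p.2) ∈ L₂} ∧
    RecognizableCA (L ∪ L') ∧ RecognizableCA (L ∩ L') :=
  ⟨rec_image f h₁, rec_preimage f h₂, rec_union hL hL', rec_inter hL hL'⟩
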